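/- If $X$ is a dense subspace of a topological group $G$, then $w(X) = w(G)$, where $w$ denotes topological weight. -/

import Mathlib

open Cardinal TopologicalSpace Set Pointwise Topology

/-- The weight of a topological space: the minimal cardinality of a base
(taken to be at least `ℵ₀`). -/
noncomputable def weight (X : Type u) [TopologicalSpace X] : Cardinal.{u} :=
  max ℵ₀ (⨅ B : {B : Set (Set X) // IsTopologicalBasis B}, #B.1)

theorem weight_le_of_isInducing {X Y : Type u} [TopologicalSpace X] [TopologicalSpace Y]
    {f : X → Y} (hf : IsInducing f) : weight X ≤ weight Y := by
  have : Nonempty {B : Set (Set X) // IsTopologicalBasis B} := ⟨⟨_, isTopologicalBasis_opens⟩⟩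
  have : Nonempty {B : Set (Set Y) // IsTopologicalBasis B} := ⟨⟨_, isTopologicalBasis_opens⟩⟩
  refine max_le_max le_rfl (le_ciInf fun B => ?_)
  calc (⨅ B : {B : Set (Set X) // IsTopologicalBasis B}, #B.1)
      ≤ #((f ⁻¹' ·) '' B.1) := ciInf_le' _ (⟨_, B.2.isInducing hf⟩ : {B : Set (Set X) // IsTopologicalBasis B})
    _ ≤ #B.1 := Cardinal.mk_image_le

theorem weight_ge_aux {G : Type u} [Group G] [TopologicalSpace G] [IsTopologicalGroup G]
    [T2Space G] {X : Set G} (hX : Dense X) {B : Set (Set X)} (hB : IsTopologicalBasis B) :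
    weight G ≤ max ℵ₀ #B := by
  classical
  set P : Set X → Set G := fun U => interior (closure ((↑) '' U)) with hPdef
  have hPopen : ∀ U, IsOpen (P U) := fun U => isOpen_interior
  -- π-base property
  have hP : ∀ W : Set G, IsOpen W → W.Nonempty → ∃ U ∈ B, (P U).Nonempty ∧ P U ⊆ W := by
    rintro W hW ⟨x, hx⟩
    obtain ⟨V', hV'mem, hV'closed, hV'W⟩ := exists_mem_nhds_isClosed_subset (hW.mem_nhds hx)
    have hI : x ∈ interior V' := mem_interior_iff_mem_nhds.2 hV'mem
    obtain ⟨y, hyX, hyI⟩ := hX.exists_mem_open isOpen_interior ⟨x, hI⟩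
    obtain ⟨U, hUB, hyU, hUsub⟩ := hB.exists_subset_of_mem_open
      (show (⟨y, hyX⟩ : X) ∈ ((↑) : X → G) ⁻¹' interior V' from hyI)
      (isOpen_interior.preimage continuous_subtype_val)
    obtain ⟨V, hVopen, hVU⟩ := isOpen_induced_iff.mp (hB.isOpen hUB)
    have himg : ((↑) : X → G) '' U = X ∩ V := by
      rw [← hVU, Subtype.image_preimage_coe]
    refine ⟨U, hUB, ⟨y, ?_⟩, ?_⟩
    · -- y ∈ P U since V ⊆ P U and y ∈ V
      have hyV : y ∈ V := by
        have : (⟨y, hyX⟩ : X) ∈ ((↑) : X → G) ⁻¹' V := hVU ▸ hyU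
        exact this
      have hVsub : V ⊆ closure (((↑) : X → G) '' U) := by
        rw [himg]
        intro z hz
        have := hX.open_subset_closure_inter hVopen hz
        rwa [inter_comm] at this
      exact interior_maximal hVsub hVopen hyV
    · -- P U ⊆ W
      have h1 : ((↑) : X → G) '' U ⊆ interior V' := by
        rintro _ ⟨z, hz, rfl⟩; exact hUsub hz
      have h2 : closure (((↑) : X → G) '' U) ⊆ W :=
        (closure_mono h1).trans ((closure_minimal interior_subset hV'closed).trans hV'W)
      exact interior_subset.trans h2
  set f : Set X → G := fun U => if h : (P U).Nonempty then h.choose else 1 with hfdef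
  have hf : ∀ U, (h : (P U).Nonempty) → f U ∈ P U := by
    intro U h
    simp only [hfdef, dif_pos h]
    exact h.choose_spec
  set N : Set X → Set G := fun U => (P U)⁻¹ * P U with hNdef
  have hNopen : ∀ U, IsOpen (N U) := fun U => (hPopen U).mul_left
  have hNsymm : ∀ U, (N U)⁻¹ = N U := by
    intro U
    simp only [hNdef, mul_inv_rev, inv_inv]
  have hNone : ∀ U, (P U).Nonempty → (1 : G) ∈ N U := by
    rintro U ⟨p, hp⟩
    exact inv_mul_cancel p ▸ Set.mul_mem_mul (Set.inv_mem_inv.2 hp) hp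
  -- N is a neighborhood basis at 1
  have hN : ∀ W : Set G, W ∈ nhds (1 : G) → ∃ U ∈ B, N U ⊆ W ∧ (P U).Nonempty := by
    intro W hW
    obtain ⟨V₁, hV₁o, hV₁1, hV₁⟩ := exists_open_nhds_one_mul_subset hW
    have h1V : (1 : G) ∈ V₁ ∩ V₁⁻¹ := ⟨hV₁1, by rw [Set.mem_inv, inv_one]; exact hV₁1⟩
    obtain ⟨U, hUB, hUne, hUsub⟩ := hP (V₁ ∩ V₁⁻¹) (hV₁o.inter hV₁o.inv) ⟨1, h1V⟩
    refine ⟨U, hUB, ?_, hUne⟩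
    rintro a ⟨p, hp, q, hq, rfl⟩
    have hp1 : p ∈ V₁ := by
      have : p⁻¹ ∈ V₁ ∩ V₁⁻¹ := hUsub (Set.mem_inv.1 hp)
      simpa using this.2
    have hq1 : q ∈ V₁ := (hUsub hq).1
    exact hV₁ (Set.mul_mem_mul hp1 hq1)
  -- the candidate basis for G
  set C : Set (Set G) := Set.range (fun p : ↥B × ↥B => f p.1.1 • N p.2.1) with hCdef
  have hC : IsTopologicalBasis C := by
    apply isTopologicalBasis_of_isOpen_of_nhds
    · rintro u ⟨⟨U, V⟩, rfl⟩
      exact (hNopen V.1).smul _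
    · intro x W hxW hWo
      have hW₁ : x⁻¹ • W ∈ nhds (1 : G) := by
        refine (hWo.smul x⁻¹).mem_nhds ?_
        exact ⟨x, hxW, by simp⟩
      obtain ⟨V₂, hV₂o, hV₂1, hV₂⟩ := exists_open_nhds_one_mul_subset hW₁
      obtain ⟨V, hVB, hVsub, hVne⟩ := hN V₂ (hV₂o.mem_nhds hV₂1)
      have h1V : (1 : G) ∈ N V := hNone V hVne
      obtain ⟨U, hUB, hUne, hUsub⟩ := hP (x • N V) ((hNopen V).smul x)
        ⟨x, 1, h1V, mul_one x⟩
      have hd : f U ∈ x • N V := hUsub (hf U hUne)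
      obtain ⟨n, hn, hdn⟩ := hd
      have hninv : n⁻¹ ∈ N V := by rw [← hNsymm V]; exact Set.inv_mem_inv.2 hn
      refine ⟨f U • N V, ⟨(⟨U, hUB⟩, ⟨V, hVB⟩), rfl⟩, ⟨n⁻¹, hninv, ?_⟩, ?_⟩
      · rw [← hdn]; simp [smul_eq_mul, mul_assoc]
      · rintro _ ⟨m, hm, rfl⟩
        have hnm : n * m ∈ x⁻¹ • W := hV₂ (Set.mul_mem_mul (hVsub hn) (hVsub hm))
        have h2 : x • (n * m) ∈ x • (x⁻¹ • W) := Set.smul_mem_smul_set hnm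
        rw [smul_inv_smul] at h2
        have h3 : f U • m = x • (n * m) := by rw [← hdn]; simp [smul_eq_mul, mul_assoc]
        show f U • m ∈ W
        rw [h3]; exact h2
  have hCcard : #C ≤ max ℵ₀ #B := by
    calc #C ≤ #(↥B × ↥B) := Cardinal.mk_range_le
      _ = #B * #B := by simp [Cardinal.mk_prod]
      _ ≤ max (max #B #B) ℵ₀ := Cardinal.mul_le_max _ _
      _ = max ℵ₀ #B := by rw [max_self, max_comm]
  calc weight G ≤ max ℵ₀ #C := max_le_max le_rfl (ciInf_le' _ (⟨C, hC⟩ : {B : Set (Set G) // IsTopologicalBasis B}))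
    _ ≤ max ℵ₀ (max ℵ₀ #B) := max_le_max le_rfl hCcard
    _ = max ℵ₀ #B := by rw [← max_assoc, max_self]

/-- If `X` is a dense subspace of a topological group `G`, then `w(X) = w(G)`. -/
theorem weight_eq_of_dense_in_topologicalGroup {G : Type u} [Group G] [TopologicalSpace G]
    [IsTopologicalGroup G] [T2Space G] {X : Set G} (hX : Dense X) :
    weight X = weight G := by
  refine le_antisymm (weight_le_of_isInducing IsInducing.subtypeVal) ?_
  have hne : Nonempty {B : Set (Set X) // IsTopologicalBasis B} :=
    ⟨⟨_, isTopologicalBasis_opens⟩⟩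
  obtain ⟨B₀, hB₀⟩ := ciInf_mem (fun B : {B : Set (Set X) // IsTopologicalBasis B} => #B.1)
  have h := weight_ge_aux hX B₀.2
  exact h.trans (le_of_eq (congrArg (max ℵ₀) hB₀))
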